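/- With the functions f₁, f₂, f₃, f₄, f₅ and d = 0.06 as specified, the function Φ(G) := f₂(G) + f₃(G)·f₄(f₁(G)/d) − f₅(f₁(G)/d) is strictly increasing on (0, ∞); moreover Φ(G) → −180 as G → 0⁺ and Φ(G) → +∞ as G → +∞. (Here f₁, f₂, f₄ are strictly increasing, f₃ is strictly increasing and positive, and f₅ is strictly decreasing on (0, ∞) because its Hill exponent h₅ = −8.54 is negative.) -/

import Mathlib

/-- Insulin production pathway `f₁(G) = R_m G^{h₁}/(G^{h₁} + (V_g k₁)^{h₁})`. -/
noncomputable def f₁ (G : ℝ) : ℝ := 210 * G ^ 2 / (G ^ 2 + 60000 ^ 2)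

/-- Insulin-independent glucose utilization `f₂`. -/
noncomputable def f₂ (G : ℝ) : ℝ :=
  72 * G ^ (1.8 : ℝ) / (G ^ (1.8 : ℝ) + (1035 : ℝ) ^ (1.8 : ℝ))

/-- Insulin-dependent glucose utilization factor `f₃(G) = G/(C₃ V_g)`. -/
noncomputable def f₃ (G : ℝ) : ℝ := G / 10000

/-- Insulin-dependent glucose utilization factor `f₄`. -/
noncomputable def f₄ (I : ℝ) : ℝ :=
  40 + 900 * I ^ (1.5 : ℝ) /
    (I ^ (1.5 : ℝ) + ((1 / 11 + 1 / 20 : ℝ)⁻¹ * 80) ^ (1.5 : ℝ))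

/-- Hepatic glucose production `f₅` (Hill exponent `h₅ = −8.54`). -/
noncomputable def f₅ (I : ℝ) : ℝ :=
  180 * I ^ (-8.54 : ℝ) / (I ^ (-8.54 : ℝ) + ((3 : ℝ) * 26.7) ^ (-8.54 : ℝ))

/-- The equilibrium function `Φ(G) = f₂(G) + f₃(G)f₄(f₁(G)/d) − f₅(f₁(G)/d)`, `d = 0.06`. -/
noncomputable def Φ (G : ℝ) : ℝ :=
  f₂ G + f₃ G * f₄ (f₁ G / 0.06) - f₅ (f₁ G / 0.06)

open Filter Set Real

lemma frac_lt {v u k : ℝ} (hv : 0 < v) (huv : v < u) (hk : 0 < k) :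
    v / (v + k) < u / (u + k) := by
  rw [div_lt_div_iff₀ (by linarith) (by linarith)]
  nlinarith

lemma K2_pos : (0:ℝ) < (1035 : ℝ) ^ (1.8 : ℝ) := Real.rpow_pos_of_pos (by norm_num) _

lemma K4_pos : (0:ℝ) < ((1 / 11 + 1 / 20 : ℝ)⁻¹ * 80) ^ (1.5 : ℝ) :=
  Real.rpow_pos_of_pos (by norm_num) _

lemma K5_pos : (0:ℝ) < ((3 : ℝ) * 26.7) ^ (-8.54 : ℝ) :=
  Real.rpow_pos_of_pos (by norm_num) _

lemma f₁_mono : StrictMonoOn f₁ (Set.Ioi (0:ℝ)) := by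
  intro a ha b hb hab
  simp only [f₁, mul_div_assoc]
  have ha' : (0:ℝ) < a := ha
  have h := frac_lt (v := a^2) (u := b^2) (k := 60000^2)
    (by positivity) (by nlinarith) (by norm_num)
  linarith

lemma f₁_pos {G : ℝ} (hG : 0 < G) : 0 < f₁ G := by
  unfold f₁; exact div_pos (by positivity) (by positivity)

lemma f₁_lt {G : ℝ} : f₁ G < 210 := by
  unfold f₁
  rw [div_lt_iff₀ (by positivity)]
  nlinarith [sq_nonneg G]

lemma f₂_mono : StrictMonoOn f₂ (Set.Ioi (0:ℝ)) := by
  intro a ha b hb hab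
  simp only [f₂, mul_div_assoc]
  have ha' : (0:ℝ) < a := ha
  have hr : a ^ (1.8:ℝ) < b ^ (1.8:ℝ) := Real.rpow_lt_rpow ha'.le hab (by norm_num)
  have h := frac_lt (v := a ^ (1.8:ℝ)) (u := b ^ (1.8:ℝ))
    (Real.rpow_pos_of_pos ha' _) hr K2_pos
  linarith

lemma f₃_mono : StrictMonoOn f₃ (Set.Ioi (0:ℝ)) := by
  intro a _ b _ hab
  simp only [f₃]
  linarith

lemma f₃_pos {G : ℝ} (hG : 0 < G) : 0 < f₃ G := by unfold f₃; linarith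

lemma f₄_mono : StrictMonoOn f₄ (Set.Ioi (0:ℝ)) := by
  intro a ha b hb hab
  simp only [f₄, mul_div_assoc]
  have ha' : (0:ℝ) < a := ha
  have hr : a ^ (1.5:ℝ) < b ^ (1.5:ℝ) := Real.rpow_lt_rpow ha'.le hab (by norm_num)
  have h := frac_lt (v := a ^ (1.5:ℝ)) (u := b ^ (1.5:ℝ))
    (Real.rpow_pos_of_pos ha' _) hr K4_pos
  linarith

lemma f₄_ge {I : ℝ} (hI : 0 < I) : 40 ≤ f₄ I := by
  unfold f₄
  have h1 : 0 < I ^ (1.5:ℝ) := Real.rpow_pos_of_pos hI _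
  have h2 := K4_pos
  nlinarith [div_nonneg (by positivity : (0:ℝ) ≤ 900 * I ^ (1.5:ℝ)) (by positivity : (0:ℝ) ≤ I ^ (1.5:ℝ) + ((1 / 11 + 1 / 20 : ℝ)⁻¹ * 80) ^ (1.5 : ℝ))]

lemma f₄_le {I : ℝ} (hI : 0 < I) : f₄ I ≤ 940 := by
  unfold f₄
  have h1 : 0 < I ^ (1.5:ℝ) := Real.rpow_pos_of_pos hI _
  have h2 := K4_pos
  have h3 : 900 * I ^ (1.5:ℝ) / (I ^ (1.5:ℝ) + ((1 / 11 + 1 / 20 : ℝ)⁻¹ * 80) ^ (1.5 : ℝ)) ≤ 900 := by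
    rw [div_le_iff₀ (by positivity)]
    nlinarith
  linarith

lemma f₅_anti : StrictAntiOn f₅ (Set.Ioi (0:ℝ)) := by
  intro a ha b hb hab
  simp only [f₅, mul_div_assoc]
  have ha' : (0:ℝ) < a := ha
  have hb' : (0:ℝ) < b := hb
  have hrp : a ^ (8.54:ℝ) < b ^ (8.54:ℝ) := Real.rpow_lt_rpow ha'.le hab (by norm_num)
  have hra : a ^ (-8.54:ℝ) = (a ^ (8.54:ℝ))⁻¹ := by
    rw [← Real.rpow_neg ha'.le]
  have hrb : b ^ (-8.54:ℝ) = (b ^ (8.54:ℝ))⁻¹ := by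
    rw [← Real.rpow_neg hb'.le]
  have hpa : 0 < a ^ (8.54:ℝ) := Real.rpow_pos_of_pos ha' _
  have hpb : 0 < b ^ (8.54:ℝ) := Real.rpow_pos_of_pos hb' _
  have hlt : b ^ (-8.54:ℝ) < a ^ (-8.54:ℝ) := by
    rw [hra, hrb]
    exact inv_strictAnti₀ hpa hrp
  have h := frac_lt (v := b ^ (-8.54:ℝ)) (u := a ^ (-8.54:ℝ))
    (by rw [hrb]; positivity) hlt K5_pos
  linarith

lemma f₅_nonneg {I : ℝ} (hI : 0 < I) : 0 ≤ f₅ I := by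
  unfold f₅
  have h1 : 0 < I ^ (-8.54:ℝ) := Real.rpow_pos_of_pos hI _
  have := K5_pos
  positivity

lemma f₅_le {I : ℝ} (hI : 0 < I) : f₅ I ≤ 180 := by
  unfold f₅
  have h1 : 0 < I ^ (-8.54:ℝ) := Real.rpow_pos_of_pos hI _
  have h2 := K5_pos
  rw [div_le_iff₀ (by positivity)]
  nlinarith

lemma f₂_nonneg {G : ℝ} (hG : 0 < G) : 0 ≤ f₂ G := by
  unfold f₂
  have h1 : 0 < G ^ (1.8:ℝ) := Real.rpow_pos_of_pos hG _
  have := K2_pos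
  positivity

lemma I_pos {G : ℝ} (hG : 0 < G) : 0 < f₁ G / 0.06 := by
  have := f₁_pos hG; positivity

lemma Φ_mono : StrictMonoOn Φ (Set.Ioi (0:ℝ)) := by
  intro a ha b hb hab
  have ha' : (0:ℝ) < a := ha
  have hb' : (0:ℝ) < b := hb
  have hI : f₁ a / 0.06 < f₁ b / 0.06 := by
    have := f₁_mono ha hb hab; norm_num at this ⊢; linarith
  have hIa : 0 < f₁ a / 0.06 := I_pos ha'
  have hIb : 0 < f₁ b / 0.06 := I_pos hb'
  have h2 := f₂_mono ha hb hab
  have h4 := f₄_mono (Set.mem_Ioi.mpr hIa) (Set.mem_Ioi.mpr hIb) hI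
  have h5 := f₅_anti (Set.mem_Ioi.mpr hIa) (Set.mem_Ioi.mpr hIb) hI
  have h3 : f₃ a * f₄ (f₁ a / 0.06) < f₃ b * f₄ (f₁ b / 0.06) := by
    have h4a : 40 ≤ f₄ (f₁ a / 0.06) := f₄_ge hIa
    have h3a : 0 < f₃ a := f₃_pos ha'
    have h3ab : f₃ a < f₃ b := f₃_mono ha hb hab
    nlinarith
  unfold Φ
  linarith

lemma cont_f₁ : Continuous f₁ := by
  unfold f₁
  exact (continuous_const.mul (continuous_pow 2)).div
    ((continuous_pow 2).add continuous_const) (fun x => by positivity)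

lemma I_tendsto_zero :
    Tendsto (fun G => f₁ G / 0.06) (nhdsWithin 0 (Set.Ioi (0:ℝ)))
      (nhdsWithin 0 (Set.Ioi (0:ℝ))) := by
  apply tendsto_nhdsWithin_of_tendsto_nhds_of_eventually_within
  · have h : Tendsto (fun G => f₁ G / 0.06) (nhds 0) (nhds (f₁ 0 / 0.06)) :=
      (cont_f₁.div_const 0.06).tendsto 0
    have h0 : f₁ (0:ℝ) / 0.06 = 0 := by unfold f₁; norm_num
    rw [h0] at h
    exact h.mono_left nhdsWithin_le_nhds
  · filter_upwards [self_mem_nhdsWithin] with G hG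
    exact I_pos hG

lemma rpow_tendsto_zero {p : ℝ} (hp : 0 < p) :
    Tendsto (fun x : ℝ => x ^ p) (nhdsWithin 0 (Set.Ioi (0:ℝ))) (nhds 0) := by
  have h : ContinuousAt (fun x : ℝ => x ^ p) 0 :=
    Real.continuousAt_rpow_const 0 p (Or.inr hp.le)
  have h0 : (0:ℝ) ^ p = 0 := Real.zero_rpow hp.ne'
  have := h.tendsto
  rw [h0] at this
  exact this.mono_left nhdsWithin_le_nhds

lemma f₂_tendsto_zero :
    Tendsto f₂ (nhdsWithin 0 (Set.Ioi (0:ℝ))) (nhds 0) := by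
  have hnum : Tendsto (fun G : ℝ => 72 * G ^ (1.8:ℝ)) (nhdsWithin 0 (Set.Ioi (0:ℝ))) (nhds 0) := by
    have := (rpow_tendsto_zero (by norm_num : (0:ℝ) < 1.8)).const_mul (72:ℝ)
    simpa using this
  have hden : Tendsto (fun G : ℝ => G ^ (1.8:ℝ) + (1035:ℝ) ^ (1.8:ℝ))
      (nhdsWithin 0 (Set.Ioi (0:ℝ))) (nhds ((1035:ℝ) ^ (1.8:ℝ))) := by
    have := (rpow_tendsto_zero (by norm_num : (0:ℝ) < 1.8)).add_const ((1035:ℝ) ^ (1.8:ℝ))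
    simpa using this
  have := hnum.div hden K2_pos.ne'
  unfold f₂
  simpa [Pi.div_def] using this

lemma f₅_tendsto :
    Tendsto f₅ (nhdsWithin 0 (Set.Ioi (0:ℝ))) (nhds 180) := by
  have heq : ∀ I ∈ Set.Ioi (0:ℝ),
      f₅ I = 180 / (1 + ((3 : ℝ) * 26.7) ^ (-8.54 : ℝ) * I ^ (8.54:ℝ)) := by
    intro I hI
    have hI' : (0:ℝ) < I := hI
    have hu : 0 < I ^ (8.54:ℝ) := Real.rpow_pos_of_pos hI' _
    have hr : I ^ (-8.54:ℝ) = (I ^ (8.54:ℝ))⁻¹ := by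
      rw [← Real.rpow_neg hI'.le]
    unfold f₅
    rw [hr]
    have hk := K5_pos
    field_simp
  have hg : Tendsto (fun I : ℝ => 180 / (1 + ((3 : ℝ) * 26.7) ^ (-8.54 : ℝ) * I ^ (8.54:ℝ)))
      (nhdsWithin 0 (Set.Ioi (0:ℝ))) (nhds 180) := by
    have hden : Tendsto (fun I : ℝ => 1 + ((3 : ℝ) * 26.7) ^ (-8.54 : ℝ) * I ^ (8.54:ℝ))
        (nhdsWithin 0 (Set.Ioi (0:ℝ))) (nhds 1) := by
      have := ((rpow_tendsto_zero (by norm_num : (0:ℝ) < 8.54)).const_mul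
        (((3 : ℝ) * 26.7) ^ (-8.54 : ℝ))).const_add (1:ℝ)
      simpa using this
    have := (tendsto_const_nhds (x := (180:ℝ))).div hden (by norm_num)
    simpa [Pi.div_def] using this
  exact hg.congr' (by
    filter_upwards [self_mem_nhdsWithin] with I hI
    exact (heq I hI).symm)

lemma f₃f₄_tendsto_zero :
    Tendsto (fun G => f₃ G * f₄ (f₁ G / 0.06)) (nhdsWithin 0 (Set.Ioi (0:ℝ))) (nhds 0) := by
  apply squeeze_zero' (f := fun G => f₃ G * f₄ (f₁ G / 0.06)) (g := fun G => G * (940/10000))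
  · filter_upwards [self_mem_nhdsWithin] with G hG
    have hG' : (0:ℝ) < G := hG
    have := f₄_ge (I_pos hG')
    have := f₃_pos hG'
    nlinarith
  · filter_upwards [self_mem_nhdsWithin] with G hG
    have hG' : (0:ℝ) < G := hG
    have h4 := f₄_le (I_pos hG')
    have h3 := f₃_pos hG'
    unfold f₃ at h3 ⊢
    nlinarith
  · have : Tendsto (fun G : ℝ => G * (940/10000)) (nhds 0) (nhds (0 * (940/10000))) :=
      (continuous_id.mul continuous_const).tendsto 0
    simpa using this.mono_left nhdsWithin_le_nhds

lemma Φ_tendsto_zero :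
    Tendsto Φ (nhdsWithin 0 (Set.Ioi (0:ℝ))) (nhds (-180)) := by
  have h5 : Tendsto (fun G => f₅ (f₁ G / 0.06)) (nhdsWithin 0 (Set.Ioi (0:ℝ))) (nhds 180) :=
    f₅_tendsto.comp I_tendsto_zero
  have := (f₂_tendsto_zero.add f₃f₄_tendsto_zero).sub h5
  unfold Φ
  simpa [Φ, sub_eq_add_neg] using this

lemma Φ_tendsto_atTop : Tendsto Φ atTop atTop := by
  apply tendsto_atTop_mono' atTop (f₁ := fun G : ℝ => G * (40/10000) - 180)
  · filter_upwards [eventually_gt_atTop (0:ℝ)] with G hG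
    have hI := I_pos hG
    have h2 := f₂_nonneg hG
    have h4 := f₄_ge hI
    have h5 := f₅_le hI
    have h3 : 0 < f₃ G := f₃_pos hG
    have hprod : G * (40/10000) ≤ f₃ G * f₄ (f₁ G / 0.06) := by
      unfold f₃ at h3 ⊢
      nlinarith
    unfold Φ
    linarith
  · have h := (tendsto_id (α := ℝ)).atTop_mul_const (r := (40/10000:ℝ)) (by norm_num)
    exact tendsto_atTop_add_const_right atTop (-180) h |>.congr (fun x => by simp only [id]; ring)

/-- `Φ` is strictly increasing on `(0, ∞)`, `Φ(G) → −180` as `G → 0⁺`, and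
`Φ(G) → +∞` as `G → +∞`; moreover `f₁, f₂, f₄` are strictly increasing on `(0, ∞)`,
`f₃` is strictly increasing and positive there, and `f₅` is strictly decreasing there. -/
theorem stmt9 :
    StrictMonoOn Φ (Set.Ioi (0 : ℝ)) ∧
    Filter.Tendsto Φ (nhdsWithin 0 (Set.Ioi (0 : ℝ))) (nhds (-180)) ∧
    Filter.Tendsto Φ Filter.atTop Filter.atTop ∧
    StrictMonoOn f₁ (Set.Ioi (0 : ℝ)) ∧
    StrictMonoOn f₂ (Set.Ioi (0 : ℝ)) ∧
    StrictMonoOn f₃ (Set.Ioi (0 : ℝ)) ∧ (∀ G : ℝ, 0 < G → 0 < f₃ G) ∧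
    StrictMonoOn f₄ (Set.Ioi (0 : ℝ)) ∧
    StrictAntiOn f₅ (Set.Ioi (0 : ℝ)) := by
  exact ⟨Φ_mono, Φ_tendsto_zero, Φ_tendsto_atTop, f₁_mono, f₂_mono, f₃_mono,
    fun G hG => f₃_pos hG, f₄_mono, f₅_anti⟩
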